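/- For every a > 0 and every δ ∈ [0, π/2), there exists a constant C > 0 such that for all complex v with |Im v| ≤ δ, one has 2·cosh(a·Re v) ≤ C·|2 cosh v|^a. Equivalently, the ratio 2cosh(a Re v)/|2cosh v|^a is bounded on the strip |Im v| ≤ δ. -/

import Mathlib

/-- For every `a > 0` and `δ ∈ [0, π/2)`, the ratio `2cosh(a Re v)/|2cosh v|^a`
is bounded on the strip `|Im v| ≤ δ`. -/
theorem cosh_ratio_bounded (a : ℝ) (ha : 0 < a) (δ : ℝ) (hδ0 : 0 ≤ δ)
    (hδ : δ < Real.pi / 2) :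
    ∃ C : ℝ, 0 < C ∧ ∀ v : ℂ, |v.im| ≤ δ →
      2 * Real.cosh (a * v.re) ≤ C * ‖2 * Complex.cosh v‖ ^ a := by
  have hpi := Real.pi_pos
  have hcosδ : 0 < Real.cos δ := Real.cos_pos_of_mem_Ioo ⟨by linarith, hδ⟩
  refine ⟨2 / Real.cos δ ^ a, by positivity, ?_⟩
  intro v hv
  set x := v.re with hx
  set y := v.im with hy
  have hcosy : Real.cos δ ≤ Real.cos y := by
    rw [← Real.cos_abs y]
    exact Real.cos_le_cos_of_nonneg_of_le_pi (abs_nonneg y) (by linarith) hv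
  have h1 : Real.cosh x * Real.cos δ ≤ ‖Complex.cosh v‖ := by
    calc Real.cosh x * Real.cos δ ≤ Real.cosh x * Real.cos y :=
          mul_le_mul_of_nonneg_left hcosy (Real.cosh_pos x).le
      _ = (Complex.cosh v).re := by
          conv_rhs => rw [show v = (x : ℂ) + y * Complex.I from (Complex.re_add_im v).symm]
          rw [Complex.cosh_add, Complex.cosh_mul_I, Complex.sinh_mul_I,
            ← Complex.ofReal_cosh, ← Complex.ofReal_sinh, ← Complex.ofReal_cos,
            ← Complex.ofReal_sin]
          simp [Complex.cos_ofReal_re]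
      _ ≤ ‖Complex.cosh v‖ := Complex.re_le_norm _
  have h2 : Real.exp |x| ≤ 2 * Real.cosh x := by
    rw [Real.cosh_eq]
    rcases abs_cases x with ⟨h, _⟩ | ⟨h, _⟩ <;> rw [h] <;>
      nlinarith [Real.exp_pos x, Real.exp_pos (-x)]
  have h3 : 2 * Real.cosh (a * x) ≤ 2 * Real.exp (a * |x|) := by
    rw [Real.cosh_eq]
    have e1 := Real.exp_le_exp.mpr (le_abs_self (a * x))
    have e2 := Real.exp_le_exp.mpr (neg_le_abs (a * x))
    rw [abs_mul, abs_of_pos ha] at e1 e2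
    linarith
  have h4 : Real.exp (a * |x|) = Real.exp |x| ^ a := by
    rw [Real.rpow_def_of_pos (Real.exp_pos _), Real.log_exp, mul_comm]
  have h5 : (2 * Real.cosh x) ^ a * Real.cos δ ^ a ≤
      ‖2 * Complex.cosh v‖ ^ a := by
    rw [← Real.mul_rpow (by positivity) hcosδ.le]
    refine Real.rpow_le_rpow (by positivity) ?_ ha.le
    rw [norm_mul, Complex.norm_two]
    nlinarith [Real.cosh_pos (x := x)]
  calc 2 * Real.cosh (a * x) ≤ 2 * Real.exp (a * |x|) := h3
    _ = 2 * Real.exp |x| ^ a := by rw [h4]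
    _ ≤ 2 * (2 * Real.cosh x) ^ a :=
        mul_le_mul_of_nonneg_left
          (Real.rpow_le_rpow (Real.exp_pos _).le h2 ha.le) (by norm_num)
    _ = (2 / Real.cos δ ^ a) * ((2 * Real.cosh x) ^ a * Real.cos δ ^ a) := by
        have : Real.cos δ ^ a ≠ 0 := by positivity
        field_simp
    _ ≤ (2 / Real.cos δ ^ a) * ‖2 * Complex.cosh v‖ ^ a :=
        mul_le_mul_of_nonneg_left h5 (by positivity)
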